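/- Let p ≥ 3 be an odd prime and suppose h = 1/(2p) + C where C is a rational number whose denominator is not divisible by p. If h = a/((p+1)!·d) with d a positive integer not divisible by p and a an integer, then a ≡ ((p−1)/2)·d (mod p). -/

import Mathlib

theorem numerator_mod_p_succ (p : ℕ) (hp : p.Prime) (hodd : 3 ≤ p)
    (C : ℚ) (hC : ¬ p ∣ C.den)
    (d : ℕ) (hd : 0 < d) (hpd : ¬ p ∣ d) (a : ℤ)
    (ha : ((1 : ℚ) / (2 * p) + C) * (((p + 1).factorial : ℚ) * d) = (a : ℚ)) :
    a ≡ (((p - 1) / 2 : ℕ) : ℤ) * d [ZMOD p] := by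
  haveI : Fact p.Prime := ⟨hp⟩
  have hp2 : p % 2 = 1 := Nat.odd_iff.mp (hp.odd_of_ne_two (by omega))
  -- 2p ∣ (p+1)!
  have hcop : Nat.Coprime 2 p := Nat.coprime_comm.mp
    (hp.coprime_iff_not_dvd.mpr (fun h => by have := Nat.le_of_dvd (by norm_num) h; omega))
  have hdvd : 2 * p ∣ (p + 1).factorial := by
    refine Nat.Coprime.mul_dvd_of_dvd_of_dvd hcop ?_ ?_
    · exact Nat.dvd_factorial (by norm_num) (by omega)
    · exact Nat.dvd_factorial hp.pos (by omega)
  obtain ⟨M, hM⟩ := hdvd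
  have hfac : (((p + 1).factorial : ℚ)) = 2 * p * M := by exact_mod_cast hM
  have h2p' : (2 * (p : ℚ)) ≠ 0 := by positivity
  -- identity: C * ((p+1)! * d) = a - M*d  in ℚ
  have key : C * (((p + 1).factorial : ℚ) * d) = ((a - (M : ℤ) * d : ℤ) : ℚ) := by
    have h1 : (1 : ℚ) / (2 * p) * (((p + 1).factorial : ℚ) * d) = (M : ℚ) * d := by
      rw [hfac]; field_simp
    push_cast
    linear_combination ha - h1
  set b : ℤ := a - (M : ℤ) * d with hb
  -- b * C.den = C.num * ((p+1)! * d)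
  have hint : b * (C.den : ℤ) = C.num * (((p + 1).factorial : ℤ) * d) := by
    have hmul : (C * (C.den : ℚ)) = C.num := Rat.mul_den_eq_num C
    have hq : (b : ℚ) * C.den = (C.num : ℚ) * (((p + 1).factorial : ℚ) * d) :=
      calc (b : ℚ) * C.den = C * (((p + 1).factorial : ℚ) * d) * C.den := by rw [key]
        _ = C * (C.den : ℚ) * (((p + 1).factorial : ℚ) * d) := by ring
        _ = (C.num : ℚ) * (((p + 1).factorial : ℚ) * d) := by rw [hmul]
    exact_mod_cast hq
  -- p ∣ b
  have hpInt : Prime (p : ℤ) := Nat.prime_iff_prime_int.mp hp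
  have hpb : (p : ℤ) ∣ b := by
    have h1 : (p : ℤ) ∣ b * (C.den : ℤ) := by
      rw [hint]
      exact Dvd.dvd.mul_left (Dvd.dvd.mul_right
        (Int.natCast_dvd_natCast.mpr (Nat.dvd_factorial hp.pos (by omega))) _) _
    rcases hpInt.dvd_mul.mp h1 with h | h
    · exact h
    · exact absurd (Int.natCast_dvd_natCast.mp h) hC
  -- reduce to ZMod p
  have main : ((a : ZMod p)) = (((((p - 1) / 2 : ℕ) : ℤ) * d : ℤ) : ZMod p) := by
    have ha' : (a : ZMod p) = (((M : ℤ) * d : ℤ) : ZMod p) := by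
      have hz : ((b : ZMod p)) = 0 := by
        rwa [ZMod.intCast_zmod_eq_zero_iff_dvd]
      rw [hb, Int.cast_sub] at hz
      exact sub_eq_zero.mp hz
    rw [ha']
    simp only [Int.cast_mul, Int.cast_natCast]
    congr 1
    -- 2 * M = (p+1) * (p-1)!  in ℕ
    have h2M : 2 * M = (p + 1) * (p - 1).factorial := by
      have hfac2 : (p + 1).factorial = (p + 1) * (p * (p - 1).factorial) := by
        rw [Nat.mul_factorial_pred hp.ne_zero, Nat.factorial_succ]
      rw [hM] at hfac2
      have h3 : p * (2 * M) = p * ((p + 1) * (p - 1).factorial) := by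
        rw [show p * (2 * M) = 2 * p * M by ring, hfac2]; ring
      exact Nat.eq_of_mul_eq_mul_left hp.pos h3
    have h2 : (2 : ZMod p) ≠ 0 := by
      intro h
      have h' : ((2 : ℕ) : ZMod p) = 0 := by exact_mod_cast h
      have := Nat.le_of_dvd (by norm_num) ((ZMod.natCast_eq_zero_iff 2 p).mp h')
      omega
    apply mul_left_cancel₀ h2
    have hhalf : 2 * ((p - 1) / 2) = p - 1 := by omega
    have e1 : (2 : ZMod p) * (M : ZMod p) = ((2 * M : ℕ) : ZMod p) := by push_cast; ring
    have e2 : (2 : ZMod p) * (((p - 1) / 2 : ℕ) : ZMod p) = ((p - 1 : ℕ) : ZMod p) := by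
      rw [← Nat.cast_ofNat, ← Nat.cast_mul, hhalf]
    rw [e1, e2, h2M]
    push_cast [Nat.cast_sub hp.one_le]
    rw [ZMod.wilsons_lemma, ZMod.natCast_self]
    ring
  exact (ZMod.intCast_eq_intCast_iff _ _ _).mp main
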